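/- arXiv:1211.5299 — 2 statements merged into one kernel-verified Lean document; each statement's English description precedes it below -/
import Mathlib

section
/- For every α ∈ [0,1), every ε ∈ (0,1) and every positive integer m, the infinite product ∏_{n≥1, n≠m} |λ_n|⁴ / (|λ_{|n−m|}|² · |λ_{m+n}|²) converges and is at most 16. -/
open Real Set Finset

lemma concaveH {α ε : ℝ} (hα0 : 0 ≤ α) (hα1 : α < 1) (hε0 : 0 < ε) (hε1 : ε < 1) :
    ConcaveOn ℝ (Set.Ici (1:ℝ))
      (fun x : ℝ => Real.log (x ^ 2 + ε ^ 2 * x ^ (4 * α))) := by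
  set F : ℝ → ℝ := fun x => x ^ 2 + ε ^ 2 * x ^ (4 * α) with hFdef
  set N : ℝ → ℝ := fun x => 2 * x + ε ^ 2 * (4 * α) * x ^ (4 * α - 1) with hNdef
  set N' : ℝ → ℝ := fun x => 2 + ε ^ 2 * (4 * α) * ((4 * α - 1) * x ^ (4 * α - 2)) with hN'def
  have hFpos : ∀ x : ℝ, 0 < x → 0 < F x := by
    intro x hx
    have h1 : 0 < x ^ 2 := pow_pos hx 2
    have h2 : 0 ≤ ε ^ 2 * x ^ (4 * α) :=
      mul_nonneg (sq_nonneg ε) (Real.rpow_nonneg hx.le _)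
    simp only [hFdef]; linarith
  have hF : ∀ x : ℝ, 0 < x → HasDerivAt F (N x) x := by
    intro x hx
    have h1 : HasDerivAt (fun x : ℝ => x ^ 2) (2 * x) x := by
      simpa using hasDerivAt_pow 2 x
    have h2 : HasDerivAt (fun x : ℝ => x ^ (4 * α)) ((4 * α) * x ^ (4 * α - 1)) x :=
      Real.hasDerivAt_rpow_const (Or.inl hx.ne')
    have := h1.add (h2.const_mul (ε ^ 2))
    refine HasDerivAt.congr_deriv this ?_
    simp only [hNdef]; ring
  have hN : ∀ x : ℝ, 0 < x → HasDerivAt N (N' x) x := by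
    intro x hx
    have h1 : HasDerivAt (fun x : ℝ => 2 * x) 2 x := by
      simpa using (hasDerivAt_id x).const_mul (2:ℝ)
    have h2 : HasDerivAt (fun x : ℝ => x ^ (4 * α - 1)) ((4 * α - 1) * x ^ (4 * α - 1 - 1)) x :=
      Real.hasDerivAt_rpow_const (Or.inl hx.ne')
    have := h1.add (h2.const_mul (ε ^ 2 * (4 * α)))
    refine HasDerivAt.congr_deriv this ?_
    simp only [hN'def]
    rw [show 4 * α - 1 - 1 = 4 * α - 2 by ring]
  -- key numerator inequality
  have hkey : ∀ x : ℝ, 1 < x → N' x * F x - N x * N x ≤ 0 := by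
    intro x hx1
    have hx0 : (0:ℝ) < x := by linarith
    have hne : x ≠ 0 := hx0.ne'
    have e1 : x ^ (4 * α - 1) = x ^ (4 * α - 2) * x := by
      rw [← Real.rpow_add_one hne (4 * α - 2)]
      congr 1; ring
    have e2 : x ^ (4 * α) = x ^ (4 * α - 2) * x * x := by
      rw [← Real.rpow_add_one hne (4 * α - 2), ← Real.rpow_add_one hne (4 * α - 2 + 1)]
      congr 1; ring
    simp only [hFdef, hNdef, hN'def, e1, e2]
    set P : ℝ := x ^ (4 * α - 2) with hPdef
    have hP : 0 < P := Real.rpow_pos_of_pos hx0 _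
    have hinner : -2 + ε^2*(16*α^2-20*α+2)*P - 4*α*ε^4*P^2 ≤ 0 := by
      have h3 : 0 ≤ 4*α*ε^4*P^2 := by positivity
      rcases le_or_gt α (1/2) with hc | hc
      · have hP1 : P ≤ 1 := by
          apply Real.rpow_le_one_of_one_le_of_nonpos hx1.le
          linarith
        have h1 : 0 ≤ 1 - ε^2*P := by nlinarith [sq_nonneg ε, hP.le]
        have h2 : 0 ≤ ε^2*P*(20*α - 16*α^2) := by
          apply mul_nonneg (by positivity); nlinarith
        nlinarith [h1, h2, h3]
      · have hc2 : 16*α^2-20*α+2 ≤ 0 := by nlinarith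
        have h1 : ε^2*(16*α^2-20*α+2)*P ≤ 0 :=
          mul_nonpos_of_nonpos_of_nonneg (mul_nonpos_of_nonneg_of_nonpos (sq_nonneg ε) hc2) hP.le
        linarith
    have hmain : x^2 * (-2 + ε^2*(16*α^2-20*α+2)*P - 4*α*ε^4*P^2) ≤ 0 :=
      mul_nonpos_of_nonneg_of_nonpos (sq_nonneg x) hinner
    nlinarith [hmain]
  apply concaveOn_of_hasDerivWithinAt2_nonpos (f' := fun x => N x / F x)
      (f'' := fun x => (N' x * F x - N x * N x) / (F x) ^ 2) (convex_Ici 1)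
  · intro x hx
    have hx0 : (0:ℝ) < x := lt_of_lt_of_le one_pos hx
    exact (((hF x hx0).log (hFpos x hx0).ne').continuousAt).continuousWithinAt
  · intro x hx
    rw [interior_Ici] at hx
    have hx0 : (0:ℝ) < x := lt_trans one_pos hx
    exact ((hF x hx0).log (hFpos x hx0).ne').hasDerivWithinAt
  · intro x hx
    rw [interior_Ici] at hx
    have hx0 : (0:ℝ) < x := lt_trans one_pos hx
    exact ((hN x hx0).div (hF x hx0) (hFpos x hx0).ne').hasDerivWithinAt
  · intro x hx
    rw [interior_Ici] at hx
    exact div_nonpos_of_nonpos_of_nonneg (hkey x hx) (sq_nonneg _)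

lemma concave_step {H : ℝ → ℝ} (hH : ConcaveOn ℝ (Set.Ici (1:ℝ)) H) {a t : ℝ}
    (ha : 1 ≤ a) (ht : 0 < t) : H a + H (a+t+1) ≤ H (a+1) + H (a+t) := by
  have hmem1 : a ∈ Set.Ici (1:ℝ) := ha
  have hmem2 : a+t+1 ∈ Set.Ici (1:ℝ) := by simp only [Set.mem_Ici]; linarith
  have hw1 : (0:ℝ) ≤ t/(t+1) := by positivity
  have hw2 : (0:ℝ) ≤ 1/(t+1) := by positivity
  have hsum : t/(t+1) + 1/(t+1) = 1 := by field_simp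
  have h1 := hH.2 hmem1 hmem2 hw1 hw2 hsum
  have h2 := hH.2 hmem1 hmem2 hw2 hw1 (by linarith)
  rw [smul_eq_mul, smul_eq_mul, smul_eq_mul, smul_eq_mul] at h1 h2
  have e1 : t/(t+1) * a + 1/(t+1) * (a+t+1) = a + 1 := by field_simp; ring
  have e2 : 1/(t+1) * a + t/(t+1) * (a+t+1) = a + t := by field_simp; ring
  rw [e1] at h1; rw [e2] at h2
  have hmul := congrArg (fun w => w * (H a + H (a+t+1))) hsum
  simp only [one_mul] at hmul
  nlinarith [h1, h2, hmul]




/-- The eigenvalues `λ_n = i·n + ε·n^{2α}` (for positive integers `n`). -/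
noncomputable def lam (ε α : ℝ) (n : ℤ) : ℂ :=
  Complex.I * (n : ℂ) + ((ε * (n.natAbs : ℝ) ^ (2 * α) : ℝ) : ℂ)

/-- Bound `Q_m¹ ≤ 16` from the Appendix:
`∏_{n≥1, n≠m} |λ_n|⁴/(|λ_{|n−m|}|²·|λ_{m+n}|²) ≤ 16`
(factors at `n = 0` and `n = m` are set to `1`). -/
theorem stmt13 (α : ℝ) (hα0 : 0 ≤ α) (hα1 : α < 1)
    (ε : ℝ) (hε : ε ∈ Set.Ioo (0 : ℝ) 1) (m : ℕ) (hm : 1 ≤ m) :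
    Multipliable (fun n : ℕ =>
      if n = 0 ∨ n = m then (1 : ℝ)
      else ‖lam ε α (n : ℤ)‖ ^ 4 /
        (‖lam ε α (((n : ℤ) - (m : ℤ)).natAbs : ℤ)‖ ^ 2 *
          ‖lam ε α ((m : ℤ) + (n : ℤ))‖ ^ 2)) ∧
    (∏' n : ℕ,
      if n = 0 ∨ n = m then (1 : ℝ)
      else ‖lam ε α (n : ℤ)‖ ^ 4 /
        (‖lam ε α (((n : ℤ) - (m : ℤ)).natAbs : ℤ)‖ ^ 2 *
          ‖lam ε α ((m : ℤ) + (n : ℤ))‖ ^ 2)) ≤ 16 := by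
  obtain ⟨hε0, hε1⟩ := hε
  set f : ℕ → ℝ := fun n : ℕ =>
      if n = 0 ∨ n = m then (1 : ℝ)
      else ‖lam ε α (n : ℤ)‖ ^ 4 /
        (‖lam ε α (((n : ℤ) - (m : ℤ)).natAbs : ℤ)‖ ^ 2 *
          ‖lam ε α ((m : ℤ) + (n : ℤ))‖ ^ 2) with hfdef
  set G : ℕ → ℝ := fun k => (k:ℝ)^2 + ε^2 * (k:ℝ)^(4*α) with hGdef
  have hGpos : ∀ k : ℕ, 1 ≤ k → 0 < G k := by
    intro k hk
    have hk0 : (0:ℝ) < (k:ℝ) := by exact_mod_cast hk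
    have := Real.rpow_nonneg hk0.le (4*α)
    have := pow_pos hk0 2
    simp only [hGdef]
    nlinarith [sq_nonneg ε]
  have hGmono : ∀ j k : ℕ, j ≤ k → G j ≤ G k := by
    intro j k hjk
    have hc : (j:ℝ) ≤ (k:ℝ) := by exact_mod_cast hjk
    have h0 : (0:ℝ) ≤ (j:ℝ) := Nat.cast_nonneg j
    have h1 : (j:ℝ)^2 ≤ (k:ℝ)^2 := by nlinarith
    have h2 : (j:ℝ)^(4*α) ≤ (k:ℝ)^(4*α) := Real.rpow_le_rpow h0 hc (by linarith)
    simp only [hGdef]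
    nlinarith [sq_nonneg ε, mul_le_mul_of_nonneg_left h2 (sq_nonneg ε)]
  have hnorm : ∀ k : ℕ, 1 ≤ k → ‖lam ε α (k:ℤ)‖^2 = G k := by
    intro k hk
    have hk0 : (0:ℝ) < (k:ℝ) := by exact_mod_cast hk
    have h1 : (lam ε α (k:ℤ)).re = ε * (k:ℝ)^(2*α) := by simp [lam]
    have h2 : (lam ε α (k:ℤ)).im = (k:ℝ) := by simp [lam]
    rw [← Complex.normSq_eq_norm_sq, Complex.normSq_apply, h1, h2]
    have h3 : (k:ℝ)^(2*α) * (k:ℝ)^(2*α) = (k:ℝ)^(4*α) := by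
      rw [← Real.rpow_add hk0]; congr 1; ring
    simp only [hGdef]
    rw [show ε*(k:ℝ)^(2*α)*(ε*(k:ℝ)^(2*α)) + (k:ℝ)*(k:ℝ)
        = (k:ℝ)^2 + ε^2*((k:ℝ)^(2*α)*(k:ℝ)^(2*α)) by ring, h3]
  -- evaluation of f
  have hval_gt : ∀ n : ℕ, m < n → f n = G n ^ 2 / (G (n-m) * G (m+n)) := by
    intro n hn
    have hne : ¬(n = 0 ∨ n = m) := by omega
    have hd : ((n:ℤ)-(m:ℤ)).natAbs = n - m := by omega
    simp only [hfdef, if_neg hne, hd]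
    rw [show ‖lam ε α (n:ℤ)‖^4 = (‖lam ε α (n:ℤ)‖^2)^2 by ring]
    rw [hnorm n (by omega)]
    rw [show ((n - m : ℕ):ℤ) = (((n-m:ℕ)):ℤ) from rfl, hnorm (n-m) (by omega)]
    rw [show (m:ℤ)+(n:ℤ) = ((m+n:ℕ):ℤ) by push_cast; ring, hnorm (m+n) (by omega)]
  have hval_lt : ∀ n : ℕ, 1 ≤ n → n < m → f n = G n ^ 2 / (G (m-n) * G (m+n)) := by
    intro n h1n hn
    have hne : ¬(n = 0 ∨ n = m) := by omega
    have hd : ((n:ℤ)-(m:ℤ)).natAbs = m - n := by omega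
    simp only [hfdef, if_neg hne, hd]
    rw [show ‖lam ε α (n:ℤ)‖^4 = (‖lam ε α (n:ℤ)‖^2)^2 by ring]
    rw [hnorm n (by omega)]
    rw [hnorm (m-n) (by omega)]
    rw [show (m:ℤ)+(n:ℤ) = ((m+n:ℕ):ℤ) by push_cast; ring, hnorm (m+n) (by omega)]
  -- the log-profile
  set L : ℕ → ℝ := fun k => Real.log (G (k+m)) - Real.log (G k) with hLdef
  have hL0 : ∀ k : ℕ, 1 ≤ k → 0 ≤ L k := by
    intro k hk
    have := Real.log_le_log (hGpos k hk) (hGmono k (k+m) (by omega))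
    simp only [hLdef]; linarith
  have hLstep : ∀ k : ℕ, 1 ≤ k → L (k+1) ≤ L k := by
    intro k hk
    have hH := concaveH hα0 hα1 hε0 hε1
    have hk1 : (1:ℝ) ≤ (k:ℝ) := by exact_mod_cast hk
    have hm0 : (0:ℝ) < (m:ℝ) := by exact_mod_cast hm
    have hstep := concave_step hH hk1 hm0
    have hGeq : ∀ (j:ℕ) (x:ℝ), ((j:ℝ) = x) → G j = x^2+ε^2*x^(4*α) := by
      intro j x h; simp only [hGdef]; rw [h]
    have e1 : ((k+1+m:ℕ):ℝ) = (k:ℝ)+(m:ℝ)+1 := by push_cast; ring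
    have e2 : ((k+1:ℕ):ℝ) = (k:ℝ)+1 := by push_cast; ring
    have e3 : ((k+m:ℕ):ℝ) = (k:ℝ)+(m:ℝ) := by push_cast; ring
    simp only [hLdef]
    rw [hGeq (k+1+m) _ e1, hGeq (k+1) _ e2, hGeq (k+m) _ e3, hGeq k _ rfl]
    linarith [hstep]
  have hLmono : ∀ j k : ℕ, 1 ≤ j → j ≤ k → L k ≤ L j := by
    intro j k hj hjk
    induction k, hjk using Nat.le_induction with
    | base => exact le_refl _
    | succ k hk ih => exact le_trans (hLstep k (le_trans hj hk)) ih
  -- split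
  set f₁ : ℕ → ℝ := fun n => if n ≤ m then f n else 1 with hf₁def
  set f₂ : ℕ → ℝ := fun n => if n ≤ m then 1 else f n with hf₂def
  have hsplit : f = fun n => f₁ n * f₂ n := by
    funext n
    by_cases h : n ≤ m <;> simp [hf₁def, hf₂def, h]
  have hf₂pos : ∀ n, 0 < f₂ n := by
    intro n
    by_cases h : n ≤ m
    · simp [hf₂def, h]
    · push_neg at h
      simp only [hf₂def, if_neg (by omega : ¬ n ≤ m)]
      rw [hval_gt n h]
      have g1 := hGpos n (by omega)
      have g2 := hGpos (n-m) (by omega)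
      have g3 := hGpos (m+n) (by omega)
      positivity
  set g : ℕ → ℝ := fun n => Real.log (f₂ n) with hgdef
  have hgval : ∀ n : ℕ, m < n → g n = L (n-m) - L n := by
    intro n hn
    have g1 := hGpos n (by omega)
    have g2 := hGpos (n-m) (by omega)
    have g3 := hGpos (m+n) (by omega)
    simp only [hgdef, hf₂def, if_neg (by omega : ¬ n ≤ m)]
    rw [hval_gt n hn]
    rw [Real.log_div (by positivity) (by positivity), Real.log_mul g2.ne' g3.ne',
      Real.log_pow]
    simp only [hLdef]
    rw [show n - m + m = n by omega, show m + n = n + m by omega]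
    push_cast
    ring
  have hg0 : ∀ n, 0 ≤ g n := by
    intro n
    by_cases h : n ≤ m
    · simp [hgdef, hf₂def, h]
    · push_neg at h
      rw [hgval n h]
      have := hLmono (n-m) n (by omega) (by omega)
      linarith
  set C : ℝ := ∑ k ∈ Finset.Ico 1 (m+1), L k with hCdef
  have hpartial : ∀ N, ∑ i ∈ Finset.range N, g i ≤ C := by
    intro N
    have hzero : ∀ i, i ≤ m → g i = 0 := by
      intro i hi; simp [hgdef, hf₂def, hi]
    have hsub : ∑ i ∈ Finset.range N, g i = ∑ i ∈ Finset.Ico (m+1) N, g i := by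
      refine (Finset.sum_subset ?_ ?_).symm
      · intro x hx; simp only [Finset.mem_Ico] at hx; simp only [Finset.mem_range]; omega
      · intro x hx hnx
        simp only [Finset.mem_range] at hx
        simp only [Finset.mem_Ico] at hnx
        exact hzero x (by omega)
    rw [hsub]
    have hCnonneg : 0 ≤ C := by
      apply Finset.sum_nonneg
      intro k hk; simp only [Finset.mem_Ico] at hk; exact hL0 k hk.1
    by_cases hN : N ≤ m + 1
    · rw [Finset.Ico_eq_empty (by omega), Finset.sum_empty]; exact hCnonneg
    · push_neg at hN
      have h1 : ∑ i ∈ Finset.Ico (m+1) N, g i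
          = ∑ i ∈ Finset.Ico (m+1) N, (L (i-m) - L i) := by
        apply Finset.sum_congr rfl
        intro i hi; simp only [Finset.mem_Ico] at hi
        exact hgval i (by omega)
      rw [h1, Finset.sum_sub_distrib]
      have h2 : ∑ i ∈ Finset.Ico (m+1) N, L (i-m) = ∑ k ∈ Finset.Ico 1 (N-m), L k := by
        rw [Finset.sum_Ico_eq_sum_range, Finset.sum_Ico_eq_sum_range]
        rw [show N - m - 1 = N - (m+1) by omega]
        apply Finset.sum_congr rfl
        intro j hj; congr 1; omega
      rw [h2]
      have h3 : ∑ k ∈ Finset.Ico 1 (N-m), L k ≤ ∑ k ∈ Finset.Ico 1 N, L k := by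
        apply Finset.sum_le_sum_of_subset_of_nonneg
        · exact Finset.Ico_subset_Ico le_rfl (by omega)
        · intro k hk _; simp only [Finset.mem_Ico] at hk; exact hL0 k hk.1
      have h4 : ∑ k ∈ Finset.Ico 1 (m+1), L k + ∑ k ∈ Finset.Ico (m+1) N, L k
          = ∑ k ∈ Finset.Ico 1 N, L k :=
        Finset.sum_Ico_consecutive _ (by omega) (by omega)
      simp only [hCdef]
      linarith
  have hgsummable : Summable g := summable_of_sum_range_le hg0 hpartial
  have htsum_le : (∑' n, g n) ≤ C := Real.tsum_le_of_sum_range_le hg0 hpartial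
  have hprod2 : HasProd f₂ (Real.exp (∑' n, g n)) := by
    have h := hgsummable.hasSum.rexp
    have hfg : (Real.exp ∘ g) = f₂ := funext fun n => Real.exp_log (hf₂pos n)
    rwa [hfg] at h
  set T₁ : ℝ := ∏ n ∈ Finset.range (m+1), f₁ n with hT₁def
  have hprod1 : HasProd f₁ T₁ := by
    apply hasProd_prod_of_ne_finset_one
    intro n hn
    simp only [Finset.mem_range] at hn
    simp only [hf₁def, if_neg (by omega : ¬ n ≤ m)]
  have hprodf : HasProd f (T₁ * Real.exp (∑' n, g n)) := by
    rw [hsplit]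
    exact hprod1.mul hprod2
  constructor
  · exact hprodf.multipliable
  -- now the bound
  rw [hprodf.tprod_eq]
  set P : ℝ := ∏ n ∈ Finset.Ico 1 m, G n with hPdef
  set Q : ℝ := ∏ n ∈ Finset.Ico 1 m, G (m+n) with hQdef
  have hPpos : 0 < P := by
    apply Finset.prod_pos; intro n hn; simp only [Finset.mem_Ico] at hn
    exact hGpos n hn.1
  have hQpos : 0 < Q := by
    apply Finset.prod_pos; intro n hn; simp only [Finset.mem_Ico] at hn
    exact hGpos (m+n) (by omega)
  have hGmpos := hGpos m hm
  have hrefl : ∏ n ∈ Finset.Ico 1 m, G (m-n) = P := by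
    simp only [hPdef]
    apply Finset.prod_nbij' (i := fun n => m - n) (j := fun n => m - n) <;>
      intro a ha <;> simp only [Finset.mem_Ico] at * <;> first | rfl | omega
  have hT1 : T₁ = P ^ 2 / (P * Q) := by
    simp only [hT₁def]
    have e1 : ∏ n ∈ Finset.range (m+1), f₁ n = ∏ n ∈ Finset.Ico 1 m, f₁ n := by
      refine (Finset.prod_subset ?_ ?_).symm
      · intro x hx; simp only [Finset.mem_Ico] at hx; simp only [Finset.mem_range]; omega
      · intro x hx hnx
        simp only [Finset.mem_range] at hx
        simp only [Finset.mem_Ico] at hnx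
        have : x = 0 ∨ x = m := by omega
        simp only [hf₁def, hfdef]
        rcases this with h | h <;> simp [h]
    rw [e1]
    have e2 : ∏ n ∈ Finset.Ico 1 m, f₁ n
        = ∏ n ∈ Finset.Ico 1 m, (G n ^ 2 / (G (m-n) * G (m+n))) := by
      apply Finset.prod_congr rfl
      intro n hn; simp only [Finset.mem_Ico] at hn
      simp only [hf₁def, if_pos (by omega : n ≤ m)]
      exact hval_lt n hn.1 hn.2
    rw [e2, Finset.prod_div_distrib, Finset.prod_mul_distrib, Finset.prod_pow, hrefl]
  have hexpC : Real.exp C = (Q * G (m+m)) / (P * G m) := by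
    simp only [hCdef]
    rw [Real.exp_sum]
    have e3 : ∀ k ∈ Finset.Ico 1 (m+1), Real.exp (L k) = G (k+m) / G k := by
      intro k hk; simp only [Finset.mem_Ico] at hk
      simp only [hLdef]
      rw [Real.exp_sub, Real.exp_log (hGpos (k+m) (by omega)), Real.exp_log (hGpos k hk.1)]
    rw [Finset.prod_congr rfl e3, Finset.prod_div_distrib]
    rw [Finset.prod_Ico_succ_top hm, Finset.prod_Ico_succ_top hm]
    congr 2
    · apply Finset.prod_congr rfl; intro n hn; rw [Nat.add_comm n m]
  have h16 : G (m+m) ≤ 16 * G m := by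
    simp only [hGdef]
    have hm0 : (0:ℝ) < (m:ℝ) := by exact_mod_cast hm
    have e4 : ((m+m:ℕ):ℝ) = 2 * (m:ℝ) := by push_cast; ring
    rw [e4]
    have e5 : (2*(m:ℝ))^(4*α) = (2:ℝ)^(4*α) * (m:ℝ)^(4*α) :=
      Real.mul_rpow (by norm_num) hm0.le
    have e6 : (2:ℝ)^(4*α) ≤ 16 := by
      have : (2:ℝ)^(4*α) ≤ (2:ℝ)^(4:ℝ) :=
        Real.rpow_le_rpow_of_exponent_le one_le_two (by linarith)
      have h24 : (2:ℝ)^(4:ℝ) = 16 := by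
        norm_num
      linarith
    have hr := Real.rpow_nonneg hm0.le (4*α)
    rw [e5]
    nlinarith [sq_nonneg ε, mul_nonneg (sq_nonneg ε) hr]
  have hT1nonneg : 0 ≤ T₁ := by rw [hT1]; positivity
  calc T₁ * Real.exp (∑' n, g n) ≤ T₁ * Real.exp C := by
        apply mul_le_mul_of_nonneg_left (Real.exp_le_exp.mpr htsum_le) hT1nonneg
    _ = G (m+m) / G m := by
        rw [hT1, hexpC, pow_two, mul_div_mul_left _ _ hPpos.ne', div_mul_div_comm,
          show P * (Q * G (m+m)) = (P*Q) * G (m+m) by ring,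
          show Q * (P * G m) = (P*Q) * G m by ring,
          mul_div_mul_left _ _ (mul_pos hPpos hQpos).ne']
    _ ≤ 16 := by
        rw [div_le_iff₀ hGmpos]; linarith
end

section
/- Let ε ∈ (0,1). If α ∈ (1/2,1), then ∑_{n=1}^{∞} ε·n^{2α}/(n² + ε²·n^{4α}) ≤ 2/(2α−1). If α ∈ [0,1/2), then ∑_{n=2}^{∞} ε·n^{2α}/(n² + ε²·n^{4α}) ≤ ε/(1−2α). -/
open Real Finset

private lemma bern {β u : ℝ} (h0 : 0 ≤ β) (h1 : β ≤ 1) (hu : 0 ≤ u) :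
    u ^ β ≤ 1 - β + β * u := by
  have h := Real.geom_mean_le_arith_mean2_weighted (w₁ := 1 - β) (w₂ := β) (p₁ := 1) (p₂ := u)
    (by linarith) h0 zero_le_one hu (by ring)
  simpa using h

private lemma L1 {β a c : ℝ} (hβ0 : 0 < β) (hβ1 : β ≤ 1) (ha : 0 ≤ a) (hac : a ≤ c)
    (hc : 0 < c) : β * c ^ (β - 1) * (c - a) ≤ c ^ β - a ^ β := by
  have key : (a / c) ^ β ≤ 1 - β + β * (a / c) := bern hβ0.le hβ1 (div_nonneg ha hc.le)
  have hcb : (0:ℝ) < c ^ β := Real.rpow_pos_of_pos hc _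
  have h1 : a ^ β = c ^ β * (a / c) ^ β := by
    rw [Real.div_rpow ha hc.le]
    field_simp
  have h2 : c ^ (β - 1) = c ^ β / c := by
    rw [Real.rpow_sub hc, Real.rpow_one]
  rw [h1, h2]
  have h3 := mul_le_mul_of_nonneg_left key hcb.le
  have h4 : c ^ β * (1 - β + β * (a / c)) = c ^ β - β * (c ^ β / c) * (c - a) := by
    field_simp
    ring
  nlinarith [h3]

private lemma L2 {β c n : ℝ} (hβ0 : 0 < β) (hβ1 : β ≤ 1) (hc : 0 < c) (hcn : c ≤ n) :
    β * n ^ (-β - 1) * (n - c) ≤ c ^ (-β) - n ^ (-β) := by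
  have hn : 0 < n := hc.trans_le hcn
  set u := c / n with hu
  have hu0 : 0 < u := div_pos hc hn
  have hu1 : u ≤ 1 := (div_le_one hn).2 hcn
  have key : u ^ β ≤ 1 - β * (1 - u) := by
    have := bern hβ0.le hβ1 hu0.le; linarith
  have hub : 0 < u ^ β := Real.rpow_pos_of_pos hu0 _
  have inv1 : 1 + β * (1 - u) ≤ 1 / u ^ β := by
    rw [le_div_iff₀ hub]
    have h5 : (0:ℝ) ≤ 1 + β * (1 - u) := by nlinarith
    nlinarith [mul_le_mul_of_nonneg_left key h5, sq_nonneg (β * (1 - u))]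
  have hnb : 0 < n ^ (-β) := Real.rpow_pos_of_pos hn _
  have hcun : c = u * n := by rw [hu, div_mul_cancel₀ _ hn.ne']
  have e1 : c ^ (-β) = 1 / u ^ β * n ^ (-β) := by
    rw [hcun, Real.mul_rpow hu0.le hn.le, Real.rpow_neg hu0.le, inv_eq_one_div]
  have e2 : n ^ (-β - 1) = n ^ (-β) / n := by
    rw [Real.rpow_sub hn, Real.rpow_one]
  have hne : β * (n ^ (-β) / n) * (n - c) = β * (1 - u) * n ^ (-β) := by
    rw [hcun]; field_simp
  rw [e1, e2, hne]
  have := mul_le_mul_of_nonneg_right inv1 hnb.le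
  nlinarith

/-- bounds for `∑ ε·n^{2α}/(n² + ε²n^{4α})`, i.e. `∑ |Re λ_n|/|λ_n|²`:
over `n ≥ 1` by `2/(2α−1)` when `α ∈ (1/2,1)`, and over `n ≥ 2` by `ε/(1−2α)`
when `α ∈ [0,1/2)`. -/
theorem stmt19 (ε : ℝ) (hε : ε ∈ Set.Ioo (0 : ℝ) 1) (α : ℝ) :
    (1 / 2 < α → α < 1 →
      Summable (fun n : ℕ =>
        ε * ((n : ℝ) + 1) ^ (2 * α) /
          (((n : ℝ) + 1) ^ 2 + ε ^ 2 * ((n : ℝ) + 1) ^ (4 * α))) ∧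
      (∑' n : ℕ,
        ε * ((n : ℝ) + 1) ^ (2 * α) /
          (((n : ℝ) + 1) ^ 2 + ε ^ 2 * ((n : ℝ) + 1) ^ (4 * α))) ≤
        2 / (2 * α - 1)) ∧
    (0 ≤ α → α < 1 / 2 →
      Summable (fun n : ℕ =>
        ε * ((n : ℝ) + 2) ^ (2 * α) /
          (((n : ℝ) + 2) ^ 2 + ε ^ 2 * ((n : ℝ) + 2) ^ (4 * α))) ∧
      (∑' n : ℕ,
        ε * ((n : ℝ) + 2) ^ (2 * α) /
          (((n : ℝ) + 2) ^ 2 + ε ^ 2 * ((n : ℝ) + 2) ^ (4 * α))) ≤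
        ε / (1 - 2 * α)) := by
  obtain ⟨hε0, hε1⟩ := hε
  constructor
  · -- Case α ∈ (1/2, 1)
    intro hα1 hα2
    set β := 2 * α - 1 with hβdef
    have hβ0 : 0 < β := by simp only [hβdef]; linarith
    have hβ1 : β ≤ 1 := by simp only [hβdef]; linarith
    set f : ℕ → ℝ := fun n : ℕ =>
        ε * ((n : ℝ) + 1) ^ (2 * α) /
          (((n : ℝ) + 1) ^ 2 + ε ^ 2 * ((n : ℝ) + 1) ^ (4 * α)) with hfdef
    set c : ℝ := ε ^ (-(1/β)) with hcdef
    have hc1 : 1 < c := by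
      rw [hcdef, Real.one_lt_rpow_iff_of_pos hε0]
      exact Or.inr ⟨hε1, by rw [neg_lt, neg_zero]; positivity⟩
    have hc0 : 0 < c := lt_trans one_pos hc1
    have hcb : c ^ β = ε⁻¹ := by
      rw [hcdef, ← Real.rpow_mul hε0.le, show -(1/β) * β = -1 by field_simp,
        Real.rpow_neg_one]
    have hcmb : c ^ (-β) = ε := by
      rw [hcdef, ← Real.rpow_mul hε0.le, show -(1/β) * -β = 1 by field_simp,
        Real.rpow_one]
    set G : ℝ → ℝ := fun t => if t ≤ c then ε * t ^ β / β else 2 / β - t ^ (-β) / (ε * β)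
      with hGdef
    have G0 : G 0 = 0 := by
      simp only [hGdef, if_pos hc0.le, Real.zero_rpow hβ0.ne', mul_zero, zero_div]
    have Gval : ∀ t : ℝ, c ≤ t → G t = 2 / β - t ^ (-β) / (ε * β) := by
      intro t ht
      simp only [hGdef]
      by_cases h : t ≤ c
      · have : t = c := le_antisymm h ht
        subst this
        rw [if_pos le_rfl, hcb, hcmb]
        field_simp
        ring
      · rw [if_neg h]
    have Gle : ∀ t : ℝ, 0 ≤ t → G t ≤ 2 / β := by
      intro t ht
      simp only [hGdef]
      by_cases h : t ≤ c
      · rw [if_pos h]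
        have h1 : t ^ β ≤ c ^ β := Real.rpow_le_rpow ht h hβ0.le
        have h2 : ε * t ^ β ≤ 1 := by
          calc ε * t ^ β ≤ ε * c ^ β := by gcongr
            _ = 1 := by rw [hcb]; field_simp
        calc ε * t ^ β / β ≤ 1 / β := by gcongr
          _ ≤ 2 / β := by gcongr <;> norm_num
      · rw [if_neg h]
        have ht0 : 0 < t := lt_trans hc0 (not_le.1 h)
        have : 0 < t ^ (-β) / (ε * β) := by
          apply div_pos (Real.rpow_pos_of_pos ht0 _) (by positivity)
        linarith
    -- basic facts about x = n+1
    have hf0 : ∀ n : ℕ, 0 ≤ f n := by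
      intro n
      have hx0 : (0:ℝ) < (n : ℝ) + 1 := by positivity
      apply div_nonneg
      · exact mul_nonneg hε0.le (Real.rpow_nonneg hx0.le _)
      · exact add_nonneg (by positivity) (mul_nonneg (by positivity) (Real.rpow_nonneg hx0.le _))
    have key : ∀ n : ℕ, f n ≤ G ((n : ℝ) + 1) - G (n : ℝ) := by
      intro n
      have hfn : f n = ε * ((n : ℝ) + 1) ^ (2 * α) /
          (((n : ℝ) + 1) ^ 2 + ε ^ 2 * ((n : ℝ) + 1) ^ (4 * α)) := rfl
      rw [hfn]
      set x : ℝ := (n : ℝ) + 1 with hxdef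
      set a : ℝ := (n : ℝ) with hadef
      have hx0 : (0:ℝ) < x := by simp only [hxdef]; positivity
      have ha0 : (0:ℝ) ≤ a := Nat.cast_nonneg n
      have hax : a ≤ x := by simp only [hxdef, hadef]; linarith
      have hxa1 : x - a = 1 := by simp [hxdef, hadef]
      have hD : 0 < x ^ 2 + ε ^ 2 * x ^ (4 * α) := by
        have := Real.rpow_pos_of_pos hx0 (4 * α); positivity
      have hxA : (0:ℝ) < x ^ (2 * α) := Real.rpow_pos_of_pos hx0 _
      -- two pointwise bounds on f n
      set F : ℝ := ε * x ^ (2 * α) / (x ^ 2 + ε ^ 2 * x ^ (4 * α)) with hFdef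
      show F ≤ _
      have hF0 : 0 ≤ F := hfn ▸ hf0 n
      have hb1 : F ≤ ε * x ^ (β - 1) := by
        have e : ε * x ^ (2 * α) / x ^ 2 = ε * x ^ (β - 1) := by
          rw [show (x:ℝ) ^ 2 = x ^ ((2:ℕ):ℝ) by rw [Real.rpow_natCast],
            show β - 1 = 2 * α - ((2:ℕ):ℝ) by push_cast [hβdef]; ring,
            Real.rpow_sub hx0]
          ring
        calc F ≤ ε * x ^ (2 * α) / x ^ 2 := by
              rw [hFdef]
              apply div_le_div_of_nonneg_left (by positivity) (by positivity)
              have := mul_nonneg (sq_nonneg ε) (Real.rpow_nonneg hx0.le (4 * α))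
              linarith
          _ = ε * x ^ (β - 1) := e
      have hb2 : F ≤ x ^ (-β - 1) / ε := by
        have e2 : x ^ (-β - 1) = (x ^ (2 * α))⁻¹ := by
          rw [show -β - 1 = -(2 * α) by rw [hβdef]; ring, Real.rpow_neg hx0.le]
        have e3 : ε * x ^ (2 * α) / (ε ^ 2 * x ^ (4 * α)) = x ^ (-β - 1) / ε := by
          have h4 : x ^ (4 * α) = x ^ (2 * α) * x ^ (2 * α) := by
            rw [← Real.rpow_add hx0]; ring_nf
          rw [e2, h4]
          field_simp
        calc F ≤ ε * x ^ (2 * α) / (ε ^ 2 * x ^ (4 * α)) := by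
              rw [hFdef]
              apply div_le_div_of_nonneg_left (by positivity) (by positivity)
              have := sq_nonneg x
              linarith
          _ = x ^ (-β - 1) / ε := e3
      by_cases hxc : x ≤ c
      · -- both in first branch
        have hGx : G x = ε * x ^ β / β := by simp only [hGdef]; rw [if_pos hxc]
        have hGa : G a = ε * a ^ β / β := by
          simp only [hGdef]; rw [if_pos (le_trans hax hxc)]
        have k1 := L1 hβ0 hβ1 ha0 hax hx0
        rw [hxa1, mul_one] at k1
        rw [hGx, hGa]
        calc F ≤ ε * x ^ (β - 1) := hb1
          _ = ε * (β * x ^ (β - 1)) / β := by field_simp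
          _ ≤ ε * (x ^ β - a ^ β) / β := by gcongr
          _ = ε * x ^ β / β - ε * a ^ β / β := by ring
      · have hcx : c ≤ x := (not_le.1 hxc).le
        have hGx : G x = 2 / β - x ^ (-β) / (ε * β) := Gval x hcx
        by_cases hac : c ≤ a
        · -- both in tail branch
          have ha0' : 0 < a := lt_of_lt_of_le hc0 hac
          have hGa : G a = 2 / β - a ^ (-β) / (ε * β) := Gval a hac
          have k2 := L2 hβ0 hβ1 ha0' hax
          rw [hxa1, mul_one] at k2
          rw [hGx, hGa]
          calc F ≤ x ^ (-β - 1) / ε := hb2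
            _ = β * x ^ (-β - 1) / (ε * β) := by field_simp
            _ ≤ (a ^ (-β) - x ^ (-β)) / (ε * β) := by gcongr
            _ = (2 / β - x ^ (-β) / (ε * β)) - (2 / β - a ^ (-β) / (ε * β)) := by ring
        · -- straddling case : a < c < x
          have hac' : a ≤ c := (not_le.1 hac).le
          have hGa : G a = ε * a ^ β / β := by simp only [hGdef]; rw [if_pos hac']
          have k1 := L1 hβ0 hβ1 ha0 hac' hc0
          have k2 := L2 hβ0 hβ1 hc0 hcx
          have k1' : x ^ (β - 1) ≤ c ^ (β - 1) :=
            Real.rpow_le_rpow_of_nonpos hc0 hcx (by linarith)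
          have w1 : (c - a) * (ε * x ^ (β - 1)) ≤ ε * (c ^ β - a ^ β) / β := by
            rw [le_div_iff₀ hβ0]
            calc (c - a) * (ε * x ^ (β - 1)) * β = ε * (β * x ^ (β - 1) * (c - a)) := by ring
              _ ≤ ε * (β * c ^ (β - 1) * (c - a)) := by
                  have hca : (0:ℝ) ≤ c - a := by linarith
                  have hβx : (0:ℝ) ≤ x ^ (β-1) := Real.rpow_nonneg hx0.le _
                  apply mul_le_mul_of_nonneg_left _ hε0.le
                  apply mul_le_mul_of_nonneg_right _ hca
                  exact mul_le_mul_of_nonneg_left k1' hβ0.le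
              _ ≤ ε * (c ^ β - a ^ β) := mul_le_mul_of_nonneg_left k1 hε0.le
          have w2 : (x - c) * (x ^ (-β - 1) / ε) ≤ (c ^ (-β) - x ^ (-β)) / (ε * β) := by
            rw [← mul_div_assoc, div_le_div_iff₀ hε0 (by positivity)]
            calc (x - c) * x ^ (-β - 1) * (ε * β) = ε * (β * x ^ (-β - 1) * (x - c)) := by ring
              _ ≤ ε * (c ^ (-β) - x ^ (-β)) := mul_le_mul_of_nonneg_left k2 hε0.le
              _ = (c ^ (-β) - x ^ (-β)) * ε := by ring
          have hsplit : G x - G a = ε * (c ^ β - a ^ β) / β + (c ^ (-β) - x ^ (-β)) / (ε * β) := by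
            rw [hGx, hGa, hcb, hcmb]
            field_simp
            ring
          have hwsum : (c - a) + (x - c) = 1 := by linarith [hxa1]
          calc F = (c - a) * F + (x - c) * F := by rw [← add_mul, hwsum, one_mul]
            _ ≤ (c - a) * (ε * x ^ (β - 1)) + (x - c) * (x ^ (-β - 1) / ε) := by
                have h1 : (0:ℝ) ≤ c - a := by linarith
                have h2 : (0:ℝ) ≤ x - c := by linarith
                exact add_le_add (mul_le_mul_of_nonneg_left hb1 h1)
                  (mul_le_mul_of_nonneg_left hb2 h2)
            _ ≤ ε * (c ^ β - a ^ β) / β + (c ^ (-β) - x ^ (-β)) / (ε * β) := add_le_add w1 w2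
            _ = G x - G a := hsplit.symm
    have hsum : ∀ N : ℕ, ∑ i ∈ Finset.range N, f i ≤ 2 / β := by
      intro N
      calc ∑ i ∈ Finset.range N, f i
          ≤ ∑ i ∈ Finset.range N, (G ((i : ℝ) + 1) - G (i : ℝ)) :=
            Finset.sum_le_sum fun i _ => key i
        _ = G (N : ℝ) - G 0 := by
            have h := Finset.sum_range_sub (fun i : ℕ => G (i : ℝ)) N
            simp only [Nat.cast_add, Nat.cast_one, Nat.cast_zero] at h
            exact h
        _ ≤ 2 / β := by rw [G0, sub_zero]; exact Gle _ (Nat.cast_nonneg N)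
    exact ⟨summable_of_sum_range_le hf0 hsum, Real.tsum_le_of_sum_range_le hf0 hsum⟩
  · -- Case α ∈ [0, 1/2)
    intro hα0 hα2
    set δ := 1 - 2 * α with hδdef
    have hδ0 : 0 < δ := by simp only [hδdef]; linarith
    have hδ1 : δ ≤ 1 := by simp only [hδdef]; linarith
    set f : ℕ → ℝ := fun n : ℕ =>
        ε * ((n : ℝ) + 2) ^ (2 * α) /
          (((n : ℝ) + 2) ^ 2 + ε ^ 2 * ((n : ℝ) + 2) ^ (4 * α)) with hfdef
    set H : ℕ → ℝ := fun n => -(ε / δ) * ((n : ℝ) + 1) ^ (-δ) with hHdef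
    have hf0 : ∀ n : ℕ, 0 ≤ f n := by
      intro n
      have hx0 : (0:ℝ) < (n : ℝ) + 2 := by positivity
      apply div_nonneg
      · exact mul_nonneg hε0.le (Real.rpow_nonneg hx0.le _)
      · exact add_nonneg (by positivity) (mul_nonneg (by positivity) (Real.rpow_nonneg hx0.le _))
    have key : ∀ n : ℕ, f n ≤ H (n + 1) - H n := by
      intro n
      have hfn : f n = ε * ((n : ℝ) + 2) ^ (2 * α) /
          (((n : ℝ) + 2) ^ 2 + ε ^ 2 * ((n : ℝ) + 2) ^ (4 * α)) := rfl
      rw [hfn]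
      set x : ℝ := (n : ℝ) + 2 with hxdef
      set F : ℝ := ε * x ^ (2 * α) / (x ^ 2 + ε ^ 2 * x ^ (4 * α)) with hFdef
      show F ≤ _
      have hx0 : (0:ℝ) < x := by simp only [hxdef]; positivity
      have ha0 : (0:ℝ) < (n : ℝ) + 1 := by positivity
      have hb1 : F ≤ ε * x ^ (-δ - 1) := by
        have e : ε * x ^ (2 * α) / x ^ 2 = ε * x ^ (-δ - 1) := by
          rw [show (x:ℝ) ^ 2 = x ^ ((2:ℕ):ℝ) by rw [Real.rpow_natCast],
            show -δ - 1 = 2 * α - ((2:ℕ):ℝ) by push_cast [hδdef]; ring,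
            Real.rpow_sub hx0]
          ring
        calc F ≤ ε * x ^ (2 * α) / x ^ 2 := by
              rw [hFdef]
              apply div_le_div_of_nonneg_left (by positivity) (by positivity)
              have := mul_nonneg (sq_nonneg ε) (Real.rpow_nonneg hx0.le (4 * α))
              linarith
          _ = ε * x ^ (-δ - 1) := e
      have k2 := L2 hδ0 hδ1 ha0 (show (n : ℝ) + 1 ≤ x by simp only [hxdef]; linarith)
      rw [show x - ((n : ℝ) + 1) = 1 by simp [hxdef]; ring, mul_one] at k2
      have hHe : H (n + 1) - H n = (ε / δ) * (((n : ℝ) + 1) ^ (-δ) - x ^ (-δ)) := by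
        simp only [hHdef, hxdef]
        push_cast
        ring_nf
      rw [hHe]
      calc F ≤ ε * x ^ (-δ - 1) := hb1
        _ = (ε / δ) * (δ * x ^ (-δ - 1)) := by field_simp
        _ ≤ (ε / δ) * (((n : ℝ) + 1) ^ (-δ) - x ^ (-δ)) := by
            apply mul_le_mul_of_nonneg_left k2 (by positivity)
    have hsum : ∀ N : ℕ, ∑ i ∈ Finset.range N, f i ≤ ε / (1 - 2 * α) := by
      intro N
      have hH0 : H 0 = -(ε / δ) := by
        simp only [hHdef]
        norm_num [Real.one_rpow]
      have hHN : H N ≤ 0 := by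
        simp only [hHdef]
        have : (0:ℝ) < ((N : ℝ) + 1) ^ (-δ) := Real.rpow_pos_of_pos (by positivity) _
        nlinarith [div_pos hε0 hδ0]
      calc ∑ i ∈ Finset.range N, f i
          ≤ ∑ i ∈ Finset.range N, (H (i + 1) - H i) := Finset.sum_le_sum fun i _ => key i
        _ = H N - H 0 := Finset.sum_range_sub H N
        _ ≤ 0 - -(ε / δ) := by rw [hH0]; linarith
        _ = ε / (1 - 2 * α) := by rw [hδdef]; ring
    exact ⟨summable_of_sum_range_le hf0 hsum, Real.tsum_le_of_sum_range_le hf0 hsum⟩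
end
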